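/- If the minimizer of I_Q(T:X|Y) over Δ_P is not unique, then there exists a minimizer lying on the relative boundary of Δ_P. -/

import Mathlib

open scoped BigOperators
noncomputable section

variable {T X Y : Type*}

/-- A joint probability distribution of `(T,X,Y)`, as a function `T → X → Y → ℝ`. -/
def IsDist [Fintype T] [Fintype X] [Fintype Y] (P : T → X → Y → ℝ) : Prop :=
  (∀ t x y, 0 ≤ P t x y) ∧ ∑ t, ∑ x, ∑ y, P t x y = 1

/-- The `(T,X)`-marginal. -/
def margTX [Fintype Y] (P : T → X → Y → ℝ) (t : T) (x : X) : ℝ := ∑ y, P t x y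

/-- The `(T,Y)`-marginal. -/
def margTY [Fintype X] (P : T → X → Y → ℝ) (t : T) (y : Y) : ℝ := ∑ x, P t x y

/-- The `(X,Y)`-marginal. -/
def margXY [Fintype T] (P : T → X → Y → ℝ) (x : X) (y : Y) : ℝ := ∑ t, P t x y

/-- The `T`-marginal. -/
def margT [Fintype X] [Fintype Y] (P : T → X → Y → ℝ) (t : T) : ℝ := ∑ x, ∑ y, P t x y

/-- The `Y`-marginal. -/
def margY [Fintype T] [Fintype X] (P : T → X → Y → ℝ) (y : Y) : ℝ := ∑ t, ∑ x, P t x y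

/-- `Δ_P`: the polytope of joint distributions with the same `(T,X)`- and
`(T,Y)`-marginals as `P`. -/
def deltaP [Fintype T] [Fintype X] [Fintype Y] (P : T → X → Y → ℝ) :
    Set (T → X → Y → ℝ) :=
  {Q | IsDist Q ∧ (∀ t x, margTX Q t x = margTX P t x) ∧
    (∀ t y, margTY Q t y = margTY P t y)}

/-- The conditional entropy `H_Q(T|X,Y)` (with the convention `0 log 0 = 0`,
automatic since `Real.log 0 = 0`). -/
def condEntTXY [Fintype T] [Fintype X] [Fintype Y] (Q : T → X → Y → ℝ) : ℝ :=
  ∑ t, ∑ x, ∑ y, -(Q t x y * Real.log (Q t x y / margXY Q x y))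

/-- The conditional mutual information `I_Q(T:X|Y)`. -/
def CMI [Fintype T] [Fintype X] [Fintype Y] (Q : T → X → Y → ℝ) : ℝ :=
  ∑ t, ∑ x, ∑ y,
    Q t x y * Real.log (Q t x y * margY Q y / (margTY Q t y * margXY Q x y))

set_option linter.unusedSectionVars false
namespace NUAux
open Real Set

lemma analyticAt_rlog {x : ℝ} (hx : 0 < x) : AnalyticAt ℝ Real.log x := by
  have h0 : Real.log = fun s : ℝ => (Complex.log (Complex.ofRealCLM s)).re := by
    funext s
    simp [Complex.ofRealCLM_apply, Complex.log_ofReal_re]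
  rw [h0]
  exact (Complex.reCLM.analyticAt _).comp
    (((analyticAt_clog (by simpa [Complex.ofRealCLM_apply] using
      Complex.ofReal_mem_slitPlane.mpr hx)  ).restrictScalars).comp
    (Complex.ofRealCLM.analyticAt x))

lemma scale_mul_log (c a A : ℝ) (hc : 0 ≤ c) :
    (c * a) * Real.log ((c * a) / (c * A)) = c * (a * Real.log (a / A)) := by
  rcases hc.eq_or_lt with h | h
  · simp [← h]
  · rw [mul_div_mul_left _ _ h.ne']; ring

lemma logsum (p q r w : ℝ) (hp : 0 ≤ p) (hpq : p ≤ q) (hr : 0 ≤ r) (hrw : r ≤ w) :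
    (p + r) * Real.log ((p + r) / (q + w)) ≤ p * Real.log (p / q) + r * Real.log (r / w) := by
  by_cases hq : q = 0
  · have hp0 : p = 0 := le_antisymm (hq ▸ hpq) hp
    simp [hq, hp0]
  by_cases hw : w = 0
  · have hr0 : r = 0 := le_antisymm (hw ▸ hrw) hr
    simp [hw, hr0]
  have hq' : 0 < q := lt_of_le_of_ne (hp.trans hpq) (Ne.symm hq)
  have hw' : 0 < w := lt_of_le_of_ne (hr.trans hrw) (Ne.symm hw)
  have hd : 0 < q + w := by linarith
  have key := Real.convexOn_mul_log.2 (Set.mem_Ici.mpr (div_nonneg hp hq'.le))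
      (Set.mem_Ici.mpr (div_nonneg hr hw'.le)) (div_nonneg hq'.le hd.le)
      (div_nonneg hw'.le hd.le) (by field_simp)
  simp only [smul_eq_mul] at key
  have e1 : q / (q + w) * (p / q) + w / (q + w) * (r / w) = (p + r) / (q + w) := by
    field_simp
  rw [e1] at key
  have key2 := mul_le_mul_of_nonneg_left key hd.le
  have i1 : (q + w) * ((p + r) / (q + w) * Real.log ((p + r) / (q + w)))
      = (p + r) * Real.log ((p + r) / (q + w)) := by
    field_simp
  have i2 : (q + w) * (q / (q + w) * (p / q * Real.log (p / q))
        + w / (q + w) * (r / w * Real.log (r / w)))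
      = p * Real.log (p / q) + r * Real.log (r / w) := by
    generalize Real.log (p / q) = L1
    generalize Real.log (r / w) = L2
    field_simp
  rw [i1, i2] at key2
  exact key2

lemma Fcombo (a A b B s : ℝ) (ha : 0 ≤ a) (haA : a ≤ A) (hb : 0 ≤ b) (hbB : b ≤ B)
    (hs0 : 0 ≤ s) (hs1 : s ≤ 1) :
    ((1 - s) * a + s * b) * Real.log (((1 - s) * a + s * b) / ((1 - s) * A + s * B))
      ≤ (1 - s) * (a * Real.log (a / A)) + s * (b * Real.log (b / B)) := by
  have h1s : (0:ℝ) ≤ 1 - s := by linarith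
  have := logsum ((1 - s) * a) ((1 - s) * A) (s * b) (s * B)
    (mul_nonneg h1s ha) (mul_le_mul_of_nonneg_left haA h1s)
    (mul_nonneg hs0 hb) (mul_le_mul_of_nonneg_left hbB hs0)
  rwa [scale_mul_log _ _ _ h1s, scale_mul_log _ _ _ hs0] at this

variable {T : Type*} [Fintype T]

lemma sum_F_eq (p : T → ℝ) (hp : ∀ t, 0 ≤ p t) :
    ∑ t, p t * Real.log (p t / ∑ u, p u)
      = (∑ t, p t * Real.log (p t)) - (∑ t, p t) * Real.log (∑ t, p t) := by
  have step : ∀ t, p t * Real.log (p t / ∑ u, p u)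
      = p t * Real.log (p t) - p t * Real.log (∑ u, p u) := by
    intro t
    rcases (hp t).eq_or_lt with h | h
    · simp [← h]
    · have hS : 0 < ∑ u, p u :=
        lt_of_lt_of_le h (Finset.single_le_sum (fun u _ => hp u) (Finset.mem_univ t))
      rw [Real.log_div h.ne' hS.ne']
      ring
  simp only [step]
  rw [Finset.sum_sub_distrib, ← Finset.sum_mul]

lemma block_conv (p q : T → ℝ) (hp : ∀ t, 0 ≤ p t) (hq : ∀ t, 0 ≤ q t)
    (s : ℝ) (hs0 : 0 ≤ s) (hs1 : s ≤ 1) :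
    (∑ t, ((1 - s) * p t + s * q t) * Real.log ((1 - s) * p t + s * q t))
        - (∑ t, ((1 - s) * p t + s * q t)) * Real.log (∑ t, ((1 - s) * p t + s * q t))
      ≤ (1 - s) * ((∑ t, p t * Real.log (p t)) - (∑ t, p t) * Real.log (∑ t, p t))
        + s * ((∑ t, q t * Real.log (q t)) - (∑ t, q t) * Real.log (∑ t, q t)) := by
  have h1s : (0:ℝ) ≤ 1 - s := by linarith
  have hc : ∀ t, 0 ≤ (1 - s) * p t + s * q t :=
    fun t => add_nonneg (mul_nonneg h1s (hp t)) (mul_nonneg hs0 (hq t))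
  rw [← sum_F_eq _ hc, ← sum_F_eq _ hp, ← sum_F_eq _ hq, Finset.mul_sum, Finset.mul_sum,
    ← Finset.sum_add_distrib]
  apply Finset.sum_le_sum
  intro t _
  have hsum : ∑ u, ((1 - s) * p u + s * q u) = (1 - s) * (∑ u, p u) + s * (∑ u, q u) := by
    rw [Finset.sum_add_distrib, ← Finset.mul_sum, ← Finset.mul_sum]
  rw [hsum]
  exact Fcombo (p t) (∑ u, p u) (q t) (∑ u, q u) s (hp t)
    (Finset.single_le_sum (fun u _ => hp u) (Finset.mem_univ t)) (hq t)
    (Finset.single_le_sum (fun u _ => hq u) (Finset.mem_univ t)) hs0 hs1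

lemma affine_eq_zero (c0 c1 a b s0 : ℝ) (hab : a < b)
    (h : ∀ s ∈ Set.Icc a b, 0 ≤ c0 + s * c1) (hs0 : s0 ∈ Set.Ioo a b)
    (h0 : c0 + s0 * c1 = 0) : c0 = 0 ∧ c1 = 0 := by
  have ha := h a ⟨le_refl a, hab.le⟩
  have hb := h b ⟨hab.le, le_refl b⟩
  obtain ⟨h1, h2⟩ := hs0
  have hc1a : c1 ≤ 0 := by nlinarith
  have hc1b : 0 ≤ c1 := by nlinarith
  have hc1 : c1 = 0 := le_antisymm hc1a hc1b
  exact ⟨by rw [hc1, mul_zero, add_zero] at h0; exact h0, hc1⟩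

lemma analyticOnNhd_phi_affine {c0 c1 a b : ℝ} (hab : a < b)
    (h : ∀ s ∈ Set.Icc a b, 0 ≤ c0 + s * c1) :
    AnalyticOnNhd ℝ (fun s => (c0 + s * c1) * Real.log (c0 + s * c1)) (Set.Ioo a b) := by
  intro s0 hs0
  by_cases hz : c0 + s0 * c1 = 0
  · obtain ⟨e0, e1⟩ := affine_eq_zero c0 c1 a b s0 hab h hs0 hz
    have hfun : (fun s : ℝ => (c0 + s * c1) * Real.log (c0 + s * c1)) = fun _ => 0 := by
      funext s; rw [e0, e1]; simp
    rw [hfun]; exact analyticAt_const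
  · have hpos : 0 < c0 + s0 * c1 :=
      lt_of_le_of_ne (h s0 (Set.mem_Icc_of_Ioo hs0)) (Ne.symm hz)
    have hl : AnalyticAt ℝ (fun s : ℝ => c0 + s * c1) s0 :=
      analyticAt_const.add ((analyticAt_id).mul analyticAt_const)
    have hcomp : AnalyticAt ℝ (fun s : ℝ => Real.log (c0 + s * c1)) s0 :=
      AnalyticAt.comp (f := fun s : ℝ => c0 + s * c1) (x := s0) (analyticAt_rlog hpos) hl
    exact hl.mul hcomp

lemma continuous_phi_affine (c0 c1 : ℝ) :
    Continuous fun s : ℝ => (c0 + s * c1) * Real.log (c0 + s * c1) := by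
  have h1 : Continuous fun s : ℝ => c0 + s * c1 := by continuity
  show Continuous ((fun x : ℝ => x * Real.log x) ∘ fun s : ℝ => c0 + s * c1)
  exact Real.continuous_mul_log.comp h1

section DeltaP
variable [Fintype T] [Fintype X] [Fintype Y]

lemma margTY_nonneg {Q : T → X → Y → ℝ} (hQ : ∀ t x y, 0 ≤ Q t x y) (t : T) (y : Y) :
    0 ≤ margTY Q t y := Finset.sum_nonneg fun x _ => hQ t x y

lemma margXY_nonneg {Q : T → X → Y → ℝ} (hQ : ∀ t x y, 0 ≤ Q t x y) (x : X) (y : Y) :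
    0 ≤ margXY Q x y := Finset.sum_nonneg fun t _ => hQ t x y

lemma margY_eq_sum_margTY (Q : T → X → Y → ℝ) (y : Y) : margY Q y = ∑ t, margTY Q t y := rfl

lemma margY_eq_of_mem {P Q : T → X → Y → ℝ} (hQ : Q ∈ deltaP P) (y : Y) :
    margY Q y = margY P y := by
  rw [margY_eq_sum_margTY, margY_eq_sum_margTY]
  exact Finset.sum_congr rfl fun t _ => hQ.2.2 t y

lemma CMI_decomp (Q : T → X → Y → ℝ) (hQ : ∀ t x y, 0 ≤ Q t x y) :
    CMI Q = (∑ t, ∑ x, ∑ y, Q t x y * Real.log (Q t x y))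
      - (∑ t, ∑ y, margTY Q t y * Real.log (margTY Q t y))
      - (∑ x, ∑ y, margXY Q x y * Real.log (margXY Q x y))
      + ∑ y, margY Q y * Real.log (margY Q y) := by
  have hTY := margTY_nonneg hQ
  have step : ∀ t x y, Q t x y * Real.log (Q t x y * margY Q y / (margTY Q t y * margXY Q x y))
      = Q t x y * Real.log (Q t x y) - Q t x y * Real.log (margTY Q t y)
        - Q t x y * Real.log (margXY Q x y) + Q t x y * Real.log (margY Q y) := by
    intro t x y
    rcases (hQ t x y).eq_or_lt with h | h
    · simp [← h]
    · have h1 : 0 < margTY Q t y :=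
        lt_of_lt_of_le h (Finset.single_le_sum (fun u _ => hQ t u y) (Finset.mem_univ x))
      have h2 : 0 < margXY Q x y :=
        lt_of_lt_of_le h (Finset.single_le_sum (fun u _ => hQ u x y) (Finset.mem_univ t))
      have h3 : 0 < margY Q y := by
        rw [margY_eq_sum_margTY]
        exact lt_of_lt_of_le h1 (Finset.single_le_sum (fun u _ => hTY u y) (Finset.mem_univ t))
      rw [Real.log_div (mul_ne_zero h.ne' h3.ne') (mul_ne_zero h1.ne' h2.ne'),
        Real.log_mul h.ne' h3.ne', Real.log_mul h1.ne' h2.ne']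
      ring
  unfold CMI
  simp only [step, Finset.sum_add_distrib, Finset.sum_sub_distrib]
  have E2 : ∑ t, ∑ x, ∑ y, Q t x y * Real.log (margTY Q t y)
      = ∑ t, ∑ y, margTY Q t y * Real.log (margTY Q t y) := by
    refine Finset.sum_congr rfl fun t _ => ?_
    rw [Finset.sum_comm]
    refine Finset.sum_congr rfl fun y _ => ?_
    simp only [margTY, Finset.sum_mul]
  have E3 : ∑ t, ∑ x, ∑ y, Q t x y * Real.log (margXY Q x y)
      = ∑ x, ∑ y, margXY Q x y * Real.log (margXY Q x y) := by
    rw [Finset.sum_comm]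
    refine Finset.sum_congr rfl fun x _ => ?_
    rw [Finset.sum_comm]
    refine Finset.sum_congr rfl fun y _ => ?_
    simp only [margXY, Finset.sum_mul]
  have E4 : ∑ t, ∑ x, ∑ y, Q t x y * Real.log (margY Q y)
      = ∑ y, margY Q y * Real.log (margY Q y) := by
    have h1 : ∀ t : T, ∑ x, ∑ y, Q t x y * Real.log (margY Q y)
        = ∑ y, ∑ x, Q t x y * Real.log (margY Q y) := fun t => Finset.sum_comm
    simp only [h1]
    rw [Finset.sum_comm]
    refine Finset.sum_congr rfl fun y _ => ?_
    simp only [margY, Finset.sum_mul]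
  rw [E2, E3, E4]

lemma deltaP_convex {P Qa Qb : T → X → Y → ℝ} (ha : Qa ∈ deltaP P) (hb : Qb ∈ deltaP P)
    {s : ℝ} (hs0 : 0 ≤ s) (hs1 : s ≤ 1) :
    (fun t x y => (1 - s) * Qa t x y + s * Qb t x y) ∈ deltaP P := by
  have h1s : (0:ℝ) ≤ 1 - s := by linarith
  refine ⟨⟨fun t x y => add_nonneg (mul_nonneg h1s (ha.1.1 t x y))
      (mul_nonneg hs0 (hb.1.1 t x y)), ?_⟩, fun t x => ?_, fun t y => ?_⟩
  · simp only [Finset.sum_add_distrib, ← Finset.mul_sum, ha.1.2, hb.1.2]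
    ring
  · simp only [margTX, Finset.sum_add_distrib, ← Finset.mul_sum]
    have h1 := ha.2.1 t x
    have h2 := hb.2.1 t x
    simp only [margTX] at h1 h2
    rw [h1, h2]; ring
  · simp only [margTY, Finset.sum_add_distrib, ← Finset.mul_sum]
    have h1 := ha.2.2 t y
    have h2 := hb.2.2 t y
    simp only [margTY] at h1 h2
    rw [h1, h2]; ring

lemma CMI_convex_combo {P Qa Qb : T → X → Y → ℝ} (ha : Qa ∈ deltaP P) (hb : Qb ∈ deltaP P)
    {s : ℝ} (hs0 : 0 ≤ s) (hs1 : s ≤ 1) :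
    CMI (fun t x y => (1 - s) * Qa t x y + s * Qb t x y)
      ≤ (1 - s) * CMI Qa + s * CMI Qb := by
  set Qc : T → X → Y → ℝ := fun t x y => (1 - s) * Qa t x y + s * Qb t x y with hQc
  have hc : Qc ∈ deltaP P := deltaP_convex ha hb hs0 hs1
  rw [CMI_decomp Qa ha.1.1, CMI_decomp Qb hb.1.1, CMI_decomp Qc hc.1.1]
  -- the margTY and margY parts coincide for all three (equal to those of P)
  have hTY : ∀ (Q : T → X → Y → ℝ), Q ∈ deltaP P →
      (∑ t, ∑ y, margTY Q t y * Real.log (margTY Q t y))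
        = ∑ t, ∑ y, margTY P t y * Real.log (margTY P t y) := by
    intro Q hQ
    exact Finset.sum_congr rfl fun t _ => Finset.sum_congr rfl fun y _ => by rw [hQ.2.2 t y]
  have hY : ∀ (Q : T → X → Y → ℝ), Q ∈ deltaP P →
      (∑ y, margY Q y * Real.log (margY Q y)) = ∑ y, margY P y * Real.log (margY P y) := by
    intro Q hQ
    exact Finset.sum_congr rfl fun y _ => by rw [margY_eq_of_mem hQ]
  rw [hTY _ ha, hTY _ hb, hTY _ hc, hY _ ha, hY _ hb, hY _ hc]
  -- reduce to the block convexity inequality summed over (x, y)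
  have key : (∑ x, ∑ y, ((∑ t, Qc t x y * Real.log (Qc t x y))
        - margXY Qc x y * Real.log (margXY Qc x y)))
      ≤ ∑ x, ∑ y, ((1 - s) * ((∑ t, Qa t x y * Real.log (Qa t x y))
          - margXY Qa x y * Real.log (margXY Qa x y))
        + s * ((∑ t, Qb t x y * Real.log (Qb t x y))
          - margXY Qb x y * Real.log (margXY Qb x y))) := by
    refine Finset.sum_le_sum fun x _ => Finset.sum_le_sum fun y _ => ?_
    simpa only [margXY] using
      block_conv (fun t => Qa t x y) (fun t => Qb t x y)
        (fun t => ha.1.1 t x y) (fun t => hb.1.1 t x y) s hs0 hs1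
  have swap : ∀ (Q : T → X → Y → ℝ), ∑ t, ∑ x, ∑ y, Q t x y * Real.log (Q t x y)
      = ∑ x, ∑ y, ∑ t, Q t x y * Real.log (Q t x y) := by
    intro Q
    rw [Finset.sum_comm]
    exact Finset.sum_congr rfl fun x _ => Finset.sum_comm
  rw [swap Qa, swap Qb, swap Qc]
  simp only [Finset.sum_sub_distrib, Finset.sum_add_distrib, ← Finset.mul_sum] at key ⊢
  linarith

lemma deltaP_isClosed (P : T → X → Y → ℝ) : IsClosed (deltaP P) := by
  have heval : ∀ (t : T) (x : X) (y : Y), Continuous fun Q : T → X → Y → ℝ => Q t x y :=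
    fun t x y => (continuous_apply y).comp ((continuous_apply x).comp (continuous_apply t))
  have h1 : IsClosed {Q : T → X → Y → ℝ | ∀ t x y, 0 ≤ Q t x y} := by
    have : {Q : T → X → Y → ℝ | ∀ t x y, 0 ≤ Q t x y}
        = ⋂ t, ⋂ x, ⋂ y, {Q : T → X → Y → ℝ | 0 ≤ Q t x y} := by
      ext Q; simp [Set.mem_iInter]
    rw [this]
    exact isClosed_iInter fun t => isClosed_iInter fun x => isClosed_iInter fun y =>
      isClosed_le continuous_const (heval t x y)
  have h2 : IsClosed {Q : T → X → Y → ℝ | ∑ t, ∑ x, ∑ y, Q t x y = 1} :=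
    isClosed_eq (continuous_finset_sum _ fun t _ => continuous_finset_sum _ fun x _ =>
      continuous_finset_sum _ fun y _ => heval t x y) continuous_const
  have h3 : IsClosed {Q : T → X → Y → ℝ | ∀ t x, margTX Q t x = margTX P t x} := by
    have : {Q : T → X → Y → ℝ | ∀ t x, margTX Q t x = margTX P t x}
        = ⋂ t, ⋂ x, {Q : T → X → Y → ℝ | margTX Q t x = margTX P t x} := by
      ext Q; simp [Set.mem_iInter]
    rw [this]
    exact isClosed_iInter fun t => isClosed_iInter fun x =>
      isClosed_eq (continuous_finset_sum _ fun y _ => heval t x y) continuous_const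
  have h4 : IsClosed {Q : T → X → Y → ℝ | ∀ t y, margTY Q t y = margTY P t y} := by
    have : {Q : T → X → Y → ℝ | ∀ t y, margTY Q t y = margTY P t y}
        = ⋂ t, ⋂ y, {Q : T → X → Y → ℝ | margTY Q t y = margTY P t y} := by
      ext Q; simp [Set.mem_iInter]
    rw [this]
    exact isClosed_iInter fun t => isClosed_iInter fun y =>
      isClosed_eq (continuous_finset_sum _ fun x _ => heval t x y) continuous_const
  have : deltaP P = ({Q : T → X → Y → ℝ | ∀ t x y, 0 ≤ Q t x y}
      ∩ {Q | ∑ t, ∑ x, ∑ y, Q t x y = 1})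
      ∩ ({Q | ∀ t x, margTX Q t x = margTX P t x} ∩ {Q | ∀ t y, margTY Q t y = margTY P t y}) := by
    ext Q
    simp only [deltaP, IsDist, Set.mem_setOf_eq, Set.mem_inter_iff]
    try tauto
  rw [this]
  exact ((h1.inter h2).inter (h3.inter h4))

lemma isDist_le_one {Q : T → X → Y → ℝ} (hQ : IsDist Q) (t : T) (x : X) (y : Y) :
    Q t x y ≤ 1 := by
  rw [← hQ.2]
  calc Q t x y ≤ ∑ y, Q t x y :=
        Finset.single_le_sum (fun u _ => hQ.1 t x u) (Finset.mem_univ y)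
    _ ≤ ∑ x, ∑ y, Q t x y :=
        Finset.single_le_sum (f := fun x => ∑ y, Q t x y)
          (fun u _ => Finset.sum_nonneg fun v _ => hQ.1 t u v) (Finset.mem_univ x)
    _ ≤ ∑ t, ∑ x, ∑ y, Q t x y :=
        Finset.single_le_sum (f := fun t => ∑ x, ∑ y, Q t x y)
          (fun u _ => Finset.sum_nonneg fun v _ => Finset.sum_nonneg fun w _ => hQ.1 u v w)
          (Finset.mem_univ t)

end DeltaP

end NUAux

open NUAux in
/-- If the minimizer of `I_Q(T:X|Y)` over `Δ_P` is not unique, then there exists a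
minimizer lying on the relative boundary of `Δ_P` (formalized as the intrinsic
frontier of the set `Δ_P`). -/
theorem nonunique_minimizer_boundary [Fintype T] [Fintype X] [Fintype Y]
    (P Q1 Q2 : T → X → Y → ℝ) (hP : IsDist P)
    (hQ1 : Q1 ∈ deltaP P) (hQ2 : Q2 ∈ deltaP P) (hne : Q1 ≠ Q2)
    (hmin1 : ∀ Q ∈ deltaP P, CMI Q1 ≤ CMI Q)
    (hmin2 : ∀ Q ∈ deltaP P, CMI Q2 ≤ CMI Q) :
    ∃ Q ∈ deltaP P, Q ∈ intrinsicFrontier ℝ (deltaP P) ∧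
      ∀ Q' ∈ deltaP P, CMI Q ≤ CMI Q' := by
  classical
  set f : ℝ → (T → X → Y → ℝ) := fun s t x y => Q1 t x y + s * (Q2 t x y - Q1 t x y) with hf
  have hf_combo : ∀ s : ℝ, f s = fun t x y => (1 - s) * Q1 t x y + s * Q2 t x y := by
    intro s; funext t x y; simp only [hf]; ring
  have h0S : f 0 = Q1 := by funext t x y; simp [hf]
  have h1S : f 1 = Q2 := by funext t x y; simp [hf]
  set S : Set ℝ := {s | f s ∈ deltaP P} with hS
  have h0mem : (0:ℝ) ∈ S := by rw [hS, Set.mem_setOf_eq, h0S]; exact hQ1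
  have h1mem : (1:ℝ) ∈ S := by rw [hS, Set.mem_setOf_eq, h1S]; exact hQ2
  have hfcont : Continuous f := by
    rw [hf]
    exact continuous_pi fun t => continuous_pi fun x => continuous_pi fun y => by continuity
  have hSclosed : IsClosed S := by
    have hE : S = f ⁻¹' (deltaP P) := rfl
    rw [hE]
    exact (deltaP_isClosed P).preimage hfcont
  -- boundedness of S
  obtain ⟨t0, x0, y0, hc⟩ : ∃ t0 x0 y0, Q1 t0 x0 y0 ≠ Q2 t0 x0 y0 := by
    by_contra h
    push_neg at h
    exact hne (funext fun t => funext fun x => funext fun y => h t x y)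
  have hd : Q2 t0 x0 y0 - Q1 t0 x0 y0 ≠ 0 := sub_ne_zero_of_ne (Ne.symm hc)
  have hq01 : 0 ≤ Q1 t0 x0 y0 := hQ1.1.1 _ _ _
  have hq11 : Q1 t0 x0 y0 ≤ 1 := isDist_le_one hQ1.1 _ _ _
  have hbound : ∀ s ∈ S, |s| ≤ 1 / |Q2 t0 x0 y0 - Q1 t0 x0 y0| := by
    intro s hs
    have hmem : f s ∈ deltaP P := hs
    have h0 : 0 ≤ Q1 t0 x0 y0 + s * (Q2 t0 x0 y0 - Q1 t0 x0 y0) := hmem.1.1 t0 x0 y0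
    have h1 : Q1 t0 x0 y0 + s * (Q2 t0 x0 y0 - Q1 t0 x0 y0) ≤ 1 :=
      isDist_le_one hmem.1 t0 x0 y0
    have habs : |s * (Q2 t0 x0 y0 - Q1 t0 x0 y0)| ≤ 1 :=
      abs_le.mpr ⟨by linarith, by linarith⟩
    rw [abs_mul] at habs
    rw [le_div_iff₀ (abs_pos.mpr hd)]
    exact habs
  have hbddA : BddAbove S :=
    ⟨1 / |Q2 t0 x0 y0 - Q1 t0 x0 y0|, fun s hs => (le_abs_self s).trans (hbound s hs)⟩
  have hbddB : BddBelow S :=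
    ⟨-(1 / |Q2 t0 x0 y0 - Q1 t0 x0 y0|), fun s hs => by
      have := hbound s hs
      have h2 := neg_abs_le s
      linarith⟩
  set b := sSup S with hb
  set a := sInf S with ha
  have hbmem : b ∈ S := hSclosed.csSup_mem ⟨0, h0mem⟩ hbddA
  have hamem : a ∈ S := hSclosed.csInf_mem ⟨0, h0mem⟩ hbddB
  have ha0 : a ≤ 0 := csInf_le hbddB h0mem
  have hb1 : (1:ℝ) ≤ b := le_csSup hbddA h1mem
  have hab : a < b := lt_of_le_of_lt ha0 (lt_of_lt_of_le one_pos hb1)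
  -- Icc a b ⊆ S
  have hIccS : Set.Icc a b ⊆ S := by
    intro s hs
    have hba : 0 < b - a := sub_pos.mpr hab
    set θ := (s - a) / (b - a) with hθ
    have hθ0 : 0 ≤ θ := div_nonneg (by linarith [hs.1]) hba.le
    have hθ1 : θ ≤ 1 := (div_le_one hba).mpr (by linarith [hs.2])
    have hsθ : s = (1 - θ) * a + θ * b := by
      have h2 : θ * (b - a) = s - a := div_mul_cancel₀ _ hba.ne'
      nlinarith [h2]
    have hcombo : f s = fun t x y => (1 - θ) * f a t x y + θ * f b t x y := by
      funext t x y
      simp only [hf]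
      rw [hsθ]
      ring
    rw [hS, Set.mem_setOf_eq, hcombo]
    exact deltaP_convex hamem hbmem hθ0 hθ1
  -- nonnegativity of the affine coordinate functions on Icc a b
  have hcoord : ∀ (t : T) (x : X) (y : Y), ∀ s ∈ Set.Icc a b,
      0 ≤ Q1 t x y + s * (Q2 t x y - Q1 t x y) :=
    fun t x y s hs => (hIccS hs).1.1 t x y
  have hmargaff : ∀ (s : ℝ), ∀ (x : X) (y : Y),
      margXY (f s) x y = margXY Q1 x y + s * (margXY Q2 x y - margXY Q1 x y) := by
    intro s x y
    simp only [margXY, hf, Finset.sum_add_distrib, ← Finset.mul_sum, Finset.sum_sub_distrib]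
  have hmarg : ∀ (x : X) (y : Y), ∀ s ∈ Set.Icc a b,
      0 ≤ margXY Q1 x y + s * (margXY Q2 x y - margXY Q1 x y) := by
    intro x y s hs
    have h := margXY_nonneg (hIccS hs).1.1 x y
    rwa [hmargaff s x y] at h
  -- the analytic surrogate G for CMI along the line
  set C : ℝ := -(∑ t, ∑ y, margTY P t y * Real.log (margTY P t y))
      + ∑ y, margY P y * Real.log (margY P y) with hC
  set G : ℝ → ℝ := fun s =>
    (∑ t, ∑ x, ∑ y, (Q1 t x y + s * (Q2 t x y - Q1 t x y))
        * Real.log (Q1 t x y + s * (Q2 t x y - Q1 t x y)))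
    - (∑ x, ∑ y, (margXY Q1 x y + s * (margXY Q2 x y - margXY Q1 x y))
        * Real.log (margXY Q1 x y + s * (margXY Q2 x y - margXY Q1 x y))) + C with hG
  have hGeq : ∀ s ∈ S, CMI (f s) = G s := by
    intro s hs
    have hmem : f s ∈ deltaP P := hs
    rw [CMI_decomp (f s) hmem.1.1]
    have e1 : (∑ t, ∑ y, margTY (f s) t y * Real.log (margTY (f s) t y))
        = ∑ t, ∑ y, margTY P t y * Real.log (margTY P t y) :=
      Finset.sum_congr rfl fun t _ => Finset.sum_congr rfl fun y _ => by rw [hmem.2.2 t y]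
    have e2 : (∑ y, margY (f s) y * Real.log (margY (f s) y))
        = ∑ y, margY P y * Real.log (margY P y) :=
      Finset.sum_congr rfl fun y _ => by rw [margY_eq_of_mem hmem]
    rw [e1, e2]
    simp only [hG, hC, hmargaff s]
    simp only [hf]
    ring
  have hm : CMI Q2 = CMI Q1 := le_antisymm (hmin2 Q1 hQ1) (hmin1 Q2 hQ2)
  have hGm : ∀ s ∈ Set.Ioo (0:ℝ) 1, G s = CMI Q1 := by
    intro s hs
    have hsI : s ∈ Set.Icc a b := ⟨ha0.trans hs.1.le, hs.2.le.trans hb1⟩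
    have hsS : s ∈ S := hIccS hsI
    have hmem : f s ∈ deltaP P := hsS
    have hup : CMI (f s) ≤ CMI Q1 := by
      have h := CMI_convex_combo hQ1 hQ2 hs.1.le hs.2.le
      rw [← hf_combo s] at h
      calc CMI (f s) ≤ (1 - s) * CMI Q1 + s * CMI Q2 := h
        _ = CMI Q1 := by rw [hm]; ring
    have hlo : CMI Q1 ≤ CMI (f s) := hmin1 _ hmem
    rw [← hGeq s hsS]
    exact le_antisymm hup hlo
  have hGan : AnalyticOnNhd ℝ G (Set.Ioo a b) := by
    rw [hG]
    apply AnalyticOnNhd.add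
    · apply AnalyticOnNhd.sub
      · exact Finset.analyticOnNhd_fun_sum _ fun t _ => Finset.analyticOnNhd_fun_sum _ fun x _ =>
          Finset.analyticOnNhd_fun_sum _ fun y _ => analyticOnNhd_phi_affine hab (hcoord t x y)
      · exact Finset.analyticOnNhd_fun_sum _ fun x _ => Finset.analyticOnNhd_fun_sum _ fun y _ =>
          analyticOnNhd_phi_affine hab (hmarg x y)
    · exact analyticOnNhd_const
  have hGconst : Set.EqOn G (fun _ => CMI Q1) (Set.Ioo a b) := by
    apply hGan.eqOn_of_preconnected_of_eventuallyEq analyticOnNhd_const isPreconnected_Ioo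
      (show (1/2 : ℝ) ∈ Set.Ioo a b from ⟨by linarith, by linarith⟩)
    filter_upwards [Ioo_mem_nhds (show (0:ℝ) < 1/2 by norm_num)
      (show (1/2:ℝ) < 1 by norm_num)] with s hs
    exact hGm s hs
  have hGcont : Continuous G := by
    rw [hG]
    apply Continuous.add
    · apply Continuous.sub
      · exact continuous_finset_sum _ fun t _ => continuous_finset_sum _ fun x _ =>
          continuous_finset_sum _ fun y _ => continuous_phi_affine _ _
      · exact continuous_finset_sum _ fun x _ => continuous_finset_sum _ fun y _ =>
          continuous_phi_affine _ _
    · exact continuous_const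
  have hGb : G b = CMI Q1 := by
    have hcl : Set.EqOn G (fun _ => CMI Q1) (closure (Set.Ioo a b)) :=
      Set.EqOn.closure hGconst hGcont continuous_const
    rw [closure_Ioo hab.ne] at hcl
    exact hcl (Set.right_mem_Icc.mpr hab.le)
  have hCMIb : CMI (f b) = CMI Q1 := by rw [hGeq b hbmem, hGb]
  -- the boundary point
  have hfbD : f b ∈ deltaP P := hbmem
  have hspan : f b ∈ affineSpan ℝ (deltaP P) := subset_affineSpan ℝ _ hfbD
  have hnotint : f b ∉ intrinsicInterior ℝ (deltaP P) := by
    rintro ⟨p, hpint, hpval⟩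
    rw [mem_interior_iff_mem_nhds, Metric.mem_nhds_iff] at hpint
    obtain ⟨ε, hε, hball⟩ := hpint
    have hvne : (Q2 - Q1 : T → X → Y → ℝ) ≠ 0 := sub_ne_zero_of_ne (Ne.symm hne)
    have hvpos : 0 < ‖(Q2 - Q1 : T → X → Y → ℝ)‖ := norm_pos_iff.mpr hvne
    set δ := ε / (2 * ‖(Q2 - Q1 : T → X → Y → ℝ)‖) with hδ
    have hδpos : 0 < δ := by positivity
    have hq_span : f (b + δ) ∈ affineSpan ℝ (deltaP P) := by
      have h2 := AffineSubspace.smul_vsub_vadd_mem (affineSpan ℝ (deltaP P)) δ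
        (subset_affineSpan ℝ _ hQ2) (subset_affineSpan ℝ _ hQ1) hspan
      have e : f (b + δ) = δ • (Q2 -ᵥ Q1) +ᵥ f b := by
        funext t x y
        simp only [hf, vsub_eq_sub, vadd_eq_add, Pi.add_apply, Pi.smul_apply, Pi.sub_apply,
          smul_eq_mul]
        ring
      rw [e]; exact h2
    have hdist : dist (⟨f (b + δ), hq_span⟩ : affineSpan ℝ (deltaP P)) p < ε := by
      rw [Subtype.dist_eq, hpval, dist_eq_norm]
      have e : f (b + δ) - f b = δ • (Q2 - Q1 : T → X → Y → ℝ) := by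
        funext t x y
        simp only [hf, Pi.sub_apply, Pi.smul_apply, smul_eq_mul]
        ring
      rw [e, norm_smul, Real.norm_eq_abs, abs_of_pos hδpos, hδ]
      have heq : ε / (2 * ‖(Q2 - Q1 : T → X → Y → ℝ)‖) * ‖(Q2 - Q1 : T → X → Y → ℝ)‖
          = ε / 2 := by
        field_simp
      rw [heq]
      linarith
    have hmem2 : (⟨f (b + δ), hq_span⟩ : affineSpan ℝ (deltaP P))
        ∈ (Subtype.val ⁻¹' (deltaP P) : Set (affineSpan ℝ (deltaP P))) :=
      hball (Metric.mem_ball.mpr hdist)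
    have hmem3 : f (b + δ) ∈ deltaP P := hmem2
    have hmem4 : b + δ ∈ S := hmem3
    have := le_csSup hbddA hmem4
    linarith
  have hfront : f b ∈ intrinsicFrontier ℝ (deltaP P) := by
    refine ⟨⟨f b, hspan⟩, ?_, rfl⟩
    rw [frontier]
    refine ⟨subset_closure ?_, fun hint => hnotint ⟨_, hint, rfl⟩⟩
    exact hfbD
  exact ⟨f b, hfbD, hfront, fun Q' hQ' => by rw [hCMIb]; exact hmin1 Q' hQ'⟩
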